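/- arXiv:2603.21469 — 2 statements merged into one kernel-verified Lean document; each statement's English description precedes it below -/
import Mathlib

section
/- Let h := δ/(1 + e^ε), let τ := q_h be the absolute value of the h-quantile of Lap(Δ/ε), and let η ~ Lap(Δ/ε). For every v ∈ ℝ, the total variation distance between the distribution of max(v, v + τ + η) and the distribution of v + τ + η is at most δ/(1 + e^ε). -/
open MeasureTheory Real

/-- The Laplace distribution on ℝ with location 0 and scale `b`. -/
noncomputable def laplace (b : ℝ) : Measure ℝ :=
  volume.withDensity fun x => ENNReal.ofReal ((2 * b)⁻¹ * Real.exp (-|x| / b))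

open Set Filter in
lemma myIntegrableOn (b c : ℝ) (hb : 0 < b) :
    IntegrableOn (fun x => Real.exp (x / b)) (Set.Iic c) := by
  refine integrableOn_Iic_of_intervalIntegral_norm_bounded (b * Real.exp (c / b)) c
    (fun y => ((continuous_exp.comp (continuous_id.div_const b)).intervalIntegrable y c).1)
    tendsto_id (eventually_of_mem (Iic_mem_atBot c) fun y _ => ?_)
  simp_rw [norm_of_nonneg (exp_pos _).le]
  rw [intervalIntegral.integral_comp_div (f := Real.exp) hb.ne', integral_exp, smul_eq_mul]
  nlinarith [exp_pos (y / b), exp_pos (c / b)]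

open Set in
lemma myIntegral (b c : ℝ) (hb : 0 < b) :
    ∫ x in Set.Iic c, Real.exp (x / b) = b * Real.exp (c / b) := by
  have h1 : ∫ x in Set.Iic c, Real.exp (x / b)
      = ∫ x in Set.Iic c, (fun y => Real.exp (-(y * b⁻¹))) (-x) := by
    congr 1; ext x; simp [div_eq_mul_inv]
  rw [h1, integral_comp_neg_Iic c (fun y => Real.exp (-(y * b⁻¹))),
    integral_comp_mul_right_Ioi (fun y => Real.exp (-y)) (-c) (inv_pos.2 hb),
    integral_exp_neg_Ioi]
  simp [smul_eq_mul, div_eq_mul_inv]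

open Set in
lemma laplace_Iic (b c : ℝ) (hb : 0 < b) (hc : c ≤ 0) :
    laplace b (Set.Iic c) = ENNReal.ofReal (2⁻¹ * Real.exp (c / b)) := by
  rw [laplace, withDensity_apply _ measurableSet_Iic]
  have e1 : ∫⁻ x in Set.Iic c, ENNReal.ofReal ((2 * b)⁻¹ * Real.exp (-|x| / b))
      = ∫⁻ x in Set.Iic c, ENNReal.ofReal ((2 * b)⁻¹ * Real.exp (x / b)) := by
    refine setLIntegral_congr_fun measurableSet_Iic (fun x hx => ?_)
    rw [abs_of_nonpos (le_trans hx hc), neg_neg]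
  rw [e1, ← MeasureTheory.ofReal_integral_eq_lintegral_ofReal
    ((myIntegrableOn b c hb).const_mul _)
    (ae_of_all _ fun x => by positivity)]
  rw [integral_const_mul, myIntegral b c hb]
  congr 1
  field_simp

/-- With `h := δ/(1+e^ε)`, `τ := q_h = (Δ/ε)·ln(1/(2h))` and `η ~ Lap(Δ/ε)`, for every `v` the
total variation distance between the law of `max v (v + τ + η)` and the law of `v + τ + η`
is at most `δ/(1+e^ε)`: every measurable set witnesses a gap of at most `δ/(1+e^ε)`. -/
theorem stmt_2 (ε δ Δ : ℝ) (hε : 0 < ε) (hδ : δ ∈ Set.Ioo (0 : ℝ) 1) (hΔ : 0 < Δ)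
    (h τ : ℝ) (hh : h = δ / (1 + Real.exp ε))
    (hτ : τ = (Δ / ε) * Real.log (1 / (2 * h))) :
    ∀ v : ℝ, ∀ S : Set ℝ, MeasurableSet S →
      |(laplace (Δ / ε) {η : ℝ | max v (v + τ + η) ∈ S}).toReal -
        (laplace (Δ / ε) {η : ℝ | v + τ + η ∈ S}).toReal| ≤ δ / (1 + Real.exp ε) := by
  intro v S hS
  obtain ⟨hδ0, hδ1⟩ := hδ
  set b := Δ / ε with hb_def
  have hb : 0 < b := div_pos hΔ hε
  have hexp1 : (1 : ℝ) < Real.exp ε := by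
    have := Real.add_one_lt_exp (ne_of_gt hε); linarith
  have hh0 : 0 < h := by rw [hh]; positivity
  have hh2 : 2 * h < 1 := by
    have e2 : 2 * h = 2 * δ / (1 + Real.exp ε) := by rw [hh]; ring
    rw [e2, div_lt_one (by linarith)]; linarith
  have hτ0 : 0 ≤ τ := by
    rw [hτ]
    refine mul_nonneg (le_of_lt hb) (Real.log_nonneg ?_)
    rw [le_div_iff₀ (by positivity)]; linarith
  -- the key tail measure
  have keymeas : laplace b (Set.Iic (-τ)) = ENNReal.ofReal h := by
    rw [laplace_Iic b (-τ) hb (neg_nonpos.2 hτ0)]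
    congr 1
    have hτb : -τ / b = Real.log (2 * h) := by
      rw [hτ, neg_div, mul_div_cancel_left₀ _ hb.ne', one_div, Real.log_inv, neg_neg]
    rw [hτb, Real.exp_log (by positivity)]
    ring
  set A : Set ℝ := {η : ℝ | max v (v + τ + η) ∈ S} with hA_def
  set B : Set ℝ := {η : ℝ | v + τ + η ∈ S} with hB_def
  set T : Set ℝ := Set.Ici (-τ) with hT_def
  have hTm : MeasurableSet T := measurableSet_Ici
  have hmax : ∀ η ∈ T, max v (v + τ + η) = v + τ + η := by
    intro η hη
    have : -τ ≤ η := hη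
    exact max_eq_right (by linarith)
  have hAB : A ∩ T = B ∩ T := by
    ext η
    simp only [Set.mem_inter_iff, Set.mem_setOf_eq, hA_def, hB_def]
    constructor
    · rintro ⟨h1, h2⟩; rw [hmax η h2] at h1; exact ⟨h1, h2⟩
    · rintro ⟨h1, h2⟩; rw [hmax η h2]; exact ⟨h1, h2⟩
  have hsubA : A \ T ⊆ Set.Iic (-τ) :=
    fun x hx => Set.mem_Iic.2 (le_of_lt (not_le.1 hx.2))
  have hsubB : B \ T ⊆ Set.Iic (-τ) :=
    fun x hx => Set.mem_Iic.2 (le_of_lt (not_le.1 hx.2))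
  have haf : laplace b (A \ T) ≤ ENNReal.ofReal h :=
    keymeas ▸ measure_mono hsubA
  have hbf : laplace b (B \ T) ≤ ENNReal.ofReal h :=
    keymeas ▸ measure_mono hsubB
  have haf' : laplace b (A \ T) ≠ ⊤ := ne_of_lt (lt_of_le_of_lt haf ENNReal.ofReal_lt_top)
  have hbf' : laplace b (B \ T) ≠ ⊤ := ne_of_lt (lt_of_le_of_lt hbf ENNReal.ofReal_lt_top)
  have dA : laplace b A = laplace b (A ∩ T) + laplace b (A \ T) :=
    (measure_inter_add_diff A hTm).symm
  have dB : laplace b B = laplace b (A ∩ T) + laplace b (B \ T) := by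
    rw [hAB]; exact (measure_inter_add_diff B hTm).symm
  have hgoal_h : δ / (1 + Real.exp ε) = h := hh.symm
  rw [hgoal_h]
  by_cases hk : laplace b (A ∩ T) = ⊤
  · have eA : laplace b A = ⊤ := by rw [dA, hk]; exact top_add _
    have eB : laplace b B = ⊤ := by rw [dB, hk]; exact top_add _
    rw [eA, eB]
    simp only [ENNReal.toReal_top, sub_zero, abs_zero]
    exact hh0.le
  · have e1 : (laplace b A).toReal
        = (laplace b (A ∩ T)).toReal + (laplace b (A \ T)).toReal := by
      rw [dA, ENNReal.toReal_add hk haf']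
    have e2 : (laplace b B).toReal
        = (laplace b (A ∩ T)).toReal + (laplace b (B \ T)).toReal := by
      rw [dB, ENNReal.toReal_add hk hbf']
    rw [e1, e2]
    have b1 : (laplace b (A \ T)).toReal ≤ h := ENNReal.toReal_le_of_le_ofReal hh0.le haf
    have b2 : (laplace b (B \ T)).toReal ≤ h := ENNReal.toReal_le_of_le_ofReal hh0.le hbf
    have n1 : 0 ≤ (laplace b (A \ T)).toReal := ENNReal.toReal_nonneg
    have n2 : 0 ≤ (laplace b (B \ T)).toReal := ENNReal.toReal_nonneg
    rw [abs_sub_le_iff]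
    constructor <;> linarith
end

section
/- Let ε > 0, δ ∈ (0, 1), let q be the (1 − δ/(2(1+e^ε)))-quantile of Lap(2/ε), and let ν, γ be independent Lap(2/ε) random variables. Then P( ν + γ > 2q ) ≤ δ/(1 + e^ε). -/
open MeasureTheory Real

instance (b : ℝ) : SigmaFinite (laplace b) := by
  unfold laplace; infer_instance

lemma integrable_exp_neg_abs_div {b : ℝ} (hb : 0 < b) :
    Integrable (fun x : ℝ => Real.exp (-|x| / b)) := by
  have hIoi : IntegrableOn (fun x : ℝ => Real.exp (-|x| / b)) (Set.Ioi 0) := by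
    refine (exp_neg_integrableOn_Ioi 0 (inv_pos.2 hb)).congr_fun (fun x hx => ?_)
      measurableSet_Ioi
    rw [abs_of_pos (Set.mem_Ioi.1 hx)]
    ring_nf
  have hIic : IntegrableOn (fun x : ℝ => Real.exp (-|x| / b)) (Set.Iic 0) := by
    rw [← Measure.map_neg_eq_self (volume : Measure ℝ)]
    have m : MeasurableEmbedding fun x : ℝ => -x := (Homeomorph.neg ℝ).measurableEmbedding
    rw [m.integrableOn_map_iff]
    simp_rw [Function.comp_def, abs_neg, Set.neg_preimage, Set.neg_Iic, neg_zero]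
    exact (integrableOn_Ici_iff_integrableOn_Ioi).mpr hIoi
  rw [← integrableOn_univ, ← Set.Iic_union_Ioi (a := (0 : ℝ)), integrableOn_union]
  exact ⟨hIic, hIoi⟩

lemma integral_exp_neg_abs_div {b : ℝ} (hb : 0 < b) :
    ∫ x : ℝ, Real.exp (-|x| / b) = 2 * b := by
  have h1 : (∫ x : ℝ, Real.exp (-|x| / b))
      = 2 * ∫ x in Set.Ioi (0 : ℝ), Real.exp (-x / b) :=
    integral_comp_abs (f := fun x => Real.exp (-x / b))
  have h2 : (∫ x in Set.Ioi (0 : ℝ), Real.exp (-x / b))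
      = ∫ x in Set.Ioi (0 : ℝ), Real.exp (-(b⁻¹ * x)) := by
    congr 1 with x
    ring_nf
  have h3 : (∫ x in Set.Ioi (0 : ℝ), (fun y => Real.exp (-y)) (b⁻¹ * x))
      = (b⁻¹)⁻¹ • ∫ x in Set.Ioi (b⁻¹ * 0), Real.exp (-x) :=
    integral_comp_mul_left_Ioi (fun y => Real.exp (-y)) 0 (inv_pos.2 hb)
  rw [h1, h2, h3, mul_zero, integral_exp_neg_Ioi_zero, inv_inv, smul_eq_mul, mul_one, mul_comm]

lemma laplace_univ {b : ℝ} (hb : 0 < b) : laplace b Set.univ = 1 := by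
  have h2b : (0 : ℝ) < 2 * b := by linarith
  rw [laplace, withDensity_apply _ MeasurableSet.univ, Measure.restrict_univ]
  rw [← ofReal_integral_eq_lintegral_ofReal
      (((integrable_exp_neg_abs_div hb).const_mul _))
      (Filter.Eventually.of_forall fun x => by positivity)]
  rw [integral_const_mul, integral_exp_neg_abs_div hb, inv_mul_cancel₀ h2b.ne',
    ENNReal.ofReal_one]

theorem laplace_prob {b : ℝ} (hb : 0 < b) : IsProbabilityMeasure (laplace b) :=
  ⟨laplace_univ hb⟩

/-- Let `ε > 0`, `δ ∈ (0,1)`, let `q` be the `(1 − δ/(2(1+e^ε)))`-quantile of `Lap(2/ε)`,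
and let `ν, γ` be independent `Lap(2/ε)` random variables.
Then `P(ν + γ > 2q) ≤ δ/(1+e^ε)`. -/
theorem stmt_13 (ε δ : ℝ) (hε : 0 < ε) (hδ : δ ∈ Set.Ioo (0 : ℝ) 1)
    (q : ℝ)
    (hq : laplace (2 / ε) (Set.Iic q) =
      ENNReal.ofReal (1 - δ / (2 * (1 + Real.exp ε)))) :
    (laplace (2 / ε)).prod (laplace (2 / ε)) {p : ℝ × ℝ | 2 * q < p.1 + p.2} ≤
      ENNReal.ofReal (δ / (1 + Real.exp ε)) := by
  set μ := laplace (2 / ε) with hμ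
  have hb : (0 : ℝ) < 2 / ε := by positivity
  have hc : (0 : ℝ) < 1 + Real.exp ε := by positivity
  set a : ℝ := δ / (2 * (1 + Real.exp ε)) with ha
  have ha0 : 0 ≤ a := div_nonneg hδ.1.le (by positivity)
  have ha1 : a ≤ 1 := by
    rw [ha, div_le_one (by positivity)]
    nlinarith [hδ.1, hδ.2, Real.exp_pos ε]
  haveI : IsProbabilityMeasure μ := laplace_prob hb
  have hμuniv : μ Set.univ = 1 := laplace_univ hb
  have hIoi : μ (Set.Ioi q) = ENNReal.ofReal a := by
    have := measure_compl (μ := μ) (s := Set.Iic q) measurableSet_Iic (measure_ne_top μ _)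
    rw [Set.compl_Iic, hμuniv, hq] at this
    rw [this, ← ENNReal.ofReal_one, ← ENNReal.ofReal_sub _ (by linarith), ha]
    ring_nf
  have hsub : {p : ℝ × ℝ | 2 * q < p.1 + p.2}
      ⊆ (Set.Ioi q ×ˢ Set.univ) ∪ (Set.univ ×ˢ Set.Ioi q) := by
    rintro ⟨x, y⟩ hp
    simp only [Set.mem_setOf_eq] at hp
    rcases lt_or_ge q x with h | h
    · exact Or.inl ⟨h, trivial⟩
    · exact Or.inr ⟨trivial, by simp only [Set.mem_Ioi]; linarith⟩
  calc μ.prod μ {p : ℝ × ℝ | 2 * q < p.1 + p.2}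
      ≤ μ.prod μ ((Set.Ioi q ×ˢ Set.univ) ∪ (Set.univ ×ˢ Set.Ioi q)) := measure_mono hsub
    _ ≤ μ.prod μ (Set.Ioi q ×ˢ Set.univ) + μ.prod μ (Set.univ ×ˢ Set.Ioi q) :=
        measure_union_le _ _
    _ = ENNReal.ofReal a + ENNReal.ofReal a := by
        rw [Measure.prod_prod, Measure.prod_prod, hμuniv, hIoi, mul_one, one_mul]
    _ ≤ ENNReal.ofReal (δ / (1 + Real.exp ε)) := by
        rw [← ENNReal.ofReal_add ha0 ha0]
        apply ENNReal.ofReal_le_ofReal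
        rw [ha, ← add_div, ← two_mul]
        rw [mul_div_mul_left _ _ (two_ne_zero)]
end
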